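/- Let σ be a free, weakly mixing measure-preserving action of a countable group G and β a free measure-preserving action of a countable group Γ on the same probability space (X,μ), with the two actions commuting. Assume that every 1-cocycle for σ is cohomologous to a constant character, i.e. for every 1-cocycle w' for σ there exist γ' ∈ Char(G) and a measurable u : X → circle with w'(g)(x) = (u(x))⁻¹ · γ'(g) · u(g⁻¹ •_σ x) for μ-a.e. x, for every g. Let w be a 1-cocycle for σ such that every w(g) is β-invariant almost everywhere: w(g)(h⁻¹ •_β x) = w(g)(x) for μ-a.e. x, for all g ∈ G, h ∈ Γ. Then there exist γ₀ ∈ Char(G), γ ∈ Char(Γ), and a measurable v : X → circle with v(h⁻¹ •_β x) = γ(h) · v(x) for μ-a.e. x for every h ∈ Γ, such that w(g)(x) = γ₀(g) · v(g⁻¹ •_σ x) · (v(x))⁻¹ for μ-a.e. x, for every g ∈ G. -/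

import Mathlib

open MeasureTheory Filter
open scoped symmDiff

noncomputable instance : MeasurableSpace Circle := borel Circle
instance : BorelSpace Circle := ⟨rfl⟩

/-- Let `σ` be a free weakly mixing m.p. action of `G` and `β` a free m.p. action of `Γ`,
commuting with `σ`. If every 1-cocycle for `σ` is cohomologous to a character and `w` is a
1-cocycle for `σ` taking `β`-invariant values, then `w(g) = γ₀(g) σ_g(v) v*` for some
`γ₀ ∈ Char(G)`, `γ ∈ Char(Γ)` and some `γ`-eigenfunction `v` for `β`. -/
theorem stmt11 {G Γ X : Type*} [Group G] [Group Γ] [Countable G] [Countable Γ]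
    [MeasurableSpace X] (μ : Measure X) [IsProbabilityMeasure μ]
    [MulAction G X] [MulAction Γ X]
    (hmpG : ∀ g : G, MeasurePreserving (fun x : X => g • x) μ μ)
    (hmpΓ : ∀ h : Γ, MeasurePreserving (fun x : X => h • x) μ μ)
    (hfreeG : ∀ g : G, g ≠ 1 → μ {x : X | g • x = x} = 0)
    (hfreeΓ : ∀ h : Γ, h ≠ 1 → μ {x : X | h • x = x} = 0)
    (hwmix : ∀ A : Set (X × X), MeasurableSet A →
      (∀ g : G, (μ.prod μ) (((fun p : X × X => (g • p.1, g • p.2)) '' A) ∆ A) = 0) →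
      (μ.prod μ) A = 0 ∨ (μ.prod μ) A = 1)
    (hcomm : ∀ (g : G) (h : Γ) (x : X), g • (h • x) = h • (g • x))
    (hcohom : ∀ w' : G → X → Circle, (∀ g : G, Measurable (w' g)) →
      (∀ g g' : G, ∀ᵐ x ∂μ, w' (g * g') x = w' g x * w' g' (g⁻¹ • x)) →
      ∃ (γ' : G →* Circle) (u : X → Circle), Measurable u ∧
        ∀ g : G, ∀ᵐ x ∂μ, w' g x = (u x)⁻¹ * γ' g * u (g⁻¹ • x))
    (w : G → X → Circle) (hwmeas : ∀ g : G, Measurable (w g))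
    (hwcoc : ∀ g g' : G, ∀ᵐ x ∂μ, w (g * g') x = w g x * w g' (g⁻¹ • x))
    (hwinv : ∀ (g : G) (h : Γ), ∀ᵐ x ∂μ, w g (h⁻¹ • x) = w g x) :
    ∃ (γ₀ : G →* Circle) (γ : Γ →* Circle) (v : X → Circle), Measurable v ∧
      (∀ h : Γ, ∀ᵐ x ∂μ, v (h⁻¹ • x) = γ h * v x) ∧
      ∀ g : G, ∀ᵐ x ∂μ, w g x = γ₀ g * v (g⁻¹ • x) * (v x)⁻¹ := by
  obtain ⟨γ', u, hu, hγu⟩ := hcohom w hwmeas hwcoc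
  -- ergodicity of the G-action on X
  have erg : ∀ B : Set X, MeasurableSet B →
      (∀ g : G, μ (((fun x : X => g • x) '' B) ∆ B) = 0) → μ B = 0 ∨ μ B = 1 := by
    intro B hB hBinv
    have key := hwmix (B ×ˢ (Set.univ : Set X)) (hB.prod MeasurableSet.univ) ?_
    · rwa [Measure.prod_prod, measure_univ, mul_one] at key
    · intro g
      have himg : (fun p : X × X => (g • p.1, g • p.2)) '' (B ×ˢ Set.univ)
          = ((fun x : X => g • x) '' B) ×ˢ (Set.univ : Set X) := by
        rw [← Set.prod_image_image_eq,
          Set.image_univ_of_surjective (MulAction.surjective g)]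
      rw [himg]
      have hsd : (((fun x : X => g • x) '' B) ×ˢ (Set.univ : Set X)) ∆ (B ×ˢ Set.univ)
          = (((fun x : X => g • x) '' B) ∆ B) ×ˢ (Set.univ : Set X) := by
        ext p
        simp [Set.mem_symmDiff]
      rw [hsd, Measure.prod_prod, measure_univ, mul_one]
      exact hBinv g
  -- invariant measurable functions are a.e. constant
  have key : ∀ f : X → Circle, Measurable f →
      (∀ g : G, ∀ᵐ x ∂μ, f (g⁻¹ • x) = f x) → ∃ c, f =ᵐ[μ] fun _ => c := by
    intro f hf hfinv
    refine exists_eventuallyEq_const_of_forall_separating (l := ae μ) MeasurableSet ?_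
    intro U hU
    have hB : MeasurableSet (f ⁻¹' U) := hf hU
    have hBinv : ∀ g : G, μ (((fun x : X => g • x) '' (f ⁻¹' U)) ∆ (f ⁻¹' U)) = 0 := by
      intro g
      refine measure_mono_null (t := {x : X | ¬ f (g⁻¹ • x) = f x}) ?_ (hfinv g)
      intro x hx
      have hxmem : x ∈ (fun x : X => g • x) '' (f ⁻¹' U) ↔ f (g⁻¹ • x) ∈ U := by
        constructor
        · rintro ⟨y, hy, rfl⟩
          simpa [inv_smul_smul] using hy
        · intro hy
          exact ⟨g⁻¹ • x, hy, smul_inv_smul g x⟩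
      rw [Set.mem_symmDiff] at hx
      intro hfx
      rcases hx with ⟨h1, h2⟩ | ⟨h1, h2⟩
      · exact h2 (show f x ∈ U by rw [← hfx]; exact hxmem.1 h1)
      · exact h2 (hxmem.2 (show f (g⁻¹ • x) ∈ U by rw [hfx]; exact h1))
    rcases erg (f ⁻¹' U) hB hBinv with h0 | h1
    · right
      exact ae_iff.2 (by simp only [not_not]; exact h0)
    · left
      have hcp : μ ((f ⁻¹' U)ᶜ) = 0 := by
        rw [measure_compl hB (measure_ne_top μ _), h1, measure_univ, tsub_self]
      exact ae_iff.2 (by exact hcp)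
  -- the eigenvalue functions
  set F : Γ → X → Circle := fun h x => u (h⁻¹ • x) * (u x)⁻¹ with hF
  have hFmeas : ∀ h : Γ, Measurable (F h) :=
    fun h => ((hu.comp (hmpΓ h⁻¹).measurable).mul (hu.inv))
  have hFinv : ∀ (h : Γ) (g : G), ∀ᵐ x ∂μ, F h (g⁻¹ • x) = F h x := by
    intro h g
    have e1 := hγu g
    have e2 : ∀ᵐ x ∂μ, w g (h⁻¹ • x)
        = (u (h⁻¹ • x))⁻¹ * γ' g * u (g⁻¹ • (h⁻¹ • x)) :=
      (hmpΓ h⁻¹).quasiMeasurePreserving.tendsto_ae.eventually e1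
    have e3 := hwinv g h
    filter_upwards [e1, e2, e3] with x h1 h2 h3
    have hcs : g⁻¹ • (h⁻¹ • x) = h⁻¹ • (g⁻¹ • x) := hcomm g⁻¹ h⁻¹ x
    rw [hcs] at h2
    have E : (u (h⁻¹ • x))⁻¹ * γ' g * u (h⁻¹ • (g⁻¹ • x))
        = (u x)⁻¹ * γ' g * u (g⁻¹ • x) := by rw [← h2, h3, h1]
    have h4 : (u (h⁻¹ • x))⁻¹ * u (h⁻¹ • (g⁻¹ • x)) = (u x)⁻¹ * u (g⁻¹ • x) := by
      rw [mul_right_comm, mul_right_comm ((u x)⁻¹)] at E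
      exact mul_right_cancel E
    show u (h⁻¹ • (g⁻¹ • x)) * (u (g⁻¹ • x))⁻¹ = u (h⁻¹ • x) * (u x)⁻¹
    calc u (h⁻¹ • (g⁻¹ • x)) * (u (g⁻¹ • x))⁻¹
        = u (h⁻¹ • x) * ((u (h⁻¹ • x))⁻¹ * u (h⁻¹ • (g⁻¹ • x))) * (u (g⁻¹ • x))⁻¹ := by
          group
      _ = u (h⁻¹ • x) * ((u x)⁻¹ * u (g⁻¹ • x)) * (u (g⁻¹ • x))⁻¹ := by rw [h4]
      _ = u (h⁻¹ • x) * (u x)⁻¹ := by group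
  choose c hc using fun h : Γ => key (F h) (hFmeas h) (hFinv h)
  have hmul : ∀ h₁ h₂ : Γ, c (h₁ * h₂) = c h₁ * c h₂ := by
    intro h₁ h₂
    have e1 := hc (h₁ * h₂)
    have e2 := hc h₁
    have e3 : ∀ᵐ x ∂μ, F h₂ (h₁⁻¹ • x) = c h₂ :=
      (hmpΓ h₁⁻¹).quasiMeasurePreserving.tendsto_ae.eventually (hc h₂)
    have : ∀ᵐ x ∂μ, c (h₁ * h₂) = c h₁ * c h₂ := by
      filter_upwards [e1, e2, e3] with x h1 h2 h3
      have hpt : F (h₁ * h₂) x = F h₂ (h₁⁻¹ • x) * F h₁ x := by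
        show u ((h₁ * h₂)⁻¹ • x) * (u x)⁻¹
            = u (h₂⁻¹ • (h₁⁻¹ • x)) * (u (h₁⁻¹ • x))⁻¹ * (u (h₁⁻¹ • x) * (u x)⁻¹)
        rw [mul_inv_rev, mul_smul]
        group
      rw [h1, h2, h3] at hpt
      rw [hpt, mul_comm]
    exact this.exists.choose_spec
  refine ⟨γ', MonoidHom.mk' c hmul, u, hu, ?_, ?_⟩
  · intro h
    filter_upwards [hc h] with x hx
    have : u (h⁻¹ • x) * (u x)⁻¹ = c h := hx
    calc u (h⁻¹ • x) = u (h⁻¹ • x) * (u x)⁻¹ * u x := by group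
      _ = MonoidHom.mk' c hmul h * u x := by rw [this]; rfl
  · intro g
    filter_upwards [hγu g] with x hx
    rw [hx, mul_comm ((u x)⁻¹) (γ' g), mul_assoc, mul_comm ((u x)⁻¹), ← mul_assoc]
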